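/- Let R and R' be two skew lines in ℙ³ over ℂ, corresponding to 2-dimensional subspaces U and U' of ℂ⁴ with U ∩ U' = 0. Let P₁, P₂, P₃, P₄ be pairwise distinct points on R and P₁', P₂', P₃', P₄' pairwise distinct points on R', and for i = 1, …, 4 let rᵢ be the line through Pᵢ and Pᵢ'. Then there exists a nonzero homogeneous quadratic form on ℂ⁴ vanishing on all four lines r₁, r₂, r₃, r₄ if and only if there exists a linear isomorphism f : U → U' whose induced projective map sends Pᵢ to Pᵢ' for every i = 1, …, 4 (i.e., if and only if the cross-ratios j(P₁,P₂;P₃,P₄) and j(P₁',P₂';P₃',P₄') are equal). -/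

import Mathlib

open Projectivization
open scoped LinearAlgebra.Projectivization

section Helpers

variable {V : Type*} [AddCommGroup V] [Module ℂ V]

lemma quad_expand (q : QuadraticMap ℂ V ℂ) (s t : ℂ) (x y : V) :
    q (s • x + t • y)
      = s * s * q x + t * t * q y + s * t * QuadraticMap.polar q x y := by
  have h1 : q (s • x + t • y)
      = q (s • x) + q (t • y) + QuadraticMap.polar q (s • x) (t • y) := by
    rw [QuadraticMap.polar]; ring
  rw [h1, QuadraticMap.polar_smul_left, QuadraticMap.polar_smul_right,
    QuadraticMap.map_smul, QuadraticMap.map_smul]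
  simp [smul_eq_mul]; ring

lemma mem_span_of_det {x y : V} {s t c d : ℂ}
    (h : s * d = t * c) (hw : c • x + d • y ≠ 0) :
    s • x + t • y ∈ Submodule.span ℂ {c • x + d • y} := by
  rcases eq_or_ne c 0 with hc | hc
  · rcases eq_or_ne d 0 with hd | hd
    · exact absurd (by simp [hc, hd]) hw
    · have hs : s = 0 := by
        have h' := h; rw [hc, mul_zero] at h'
        rcases mul_eq_zero.mp h' with h'' | h''
        · exact h''
        · exact absurd h'' hd
      rw [Submodule.mem_span_singleton]
      refine ⟨t / d, ?_⟩
      rw [smul_add, smul_smul, smul_smul, div_mul_cancel₀ _ hd, hs, hc]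
      simp
  · rw [Submodule.mem_span_singleton]
    refine ⟨s / c, ?_⟩
    rw [smul_add, smul_smul, smul_smul, div_mul_cancel₀ _ hc]
    congr 2
    field_simp
    linear_combination h

lemma point_eq_of_mem_span {p1 p2 : ℙ ℂ (Fin 4 → ℂ)}
    (h : p1.rep ∈ Submodule.span ℂ {p2.rep}) : p1 = p2 := by
  apply Projectivization.submodule_injective
  rw [Projectivization.submodule_eq, Projectivization.submodule_eq]
  obtain ⟨c, hc⟩ := Submodule.mem_span_singleton.mp h
  have hc0 : c ≠ 0 := by
    rintro rfl
    exact p1.rep_nonzero (by simpa using hc.symm)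
  rw [show (Submodule.span ℂ {p1.rep} : Submodule ℂ (Fin 4 → ℂ)) = Submodule.span ℂ {c • p2.rep} by rw [hc]]
  exact Submodule.span_singleton_smul_eq hc0.isUnit _

lemma indep_of_ne {p1 p2 : ℙ ℂ (Fin 4 → ℂ)} (h : p1 ≠ p2) :
    LinearIndependent ℂ ![p1.rep, p2.rep] := by
  rw [linearIndependent_fin2]
  simp only [Matrix.cons_val_zero, Matrix.cons_val_one, Matrix.head_cons]
  refine ⟨p2.rep_nonzero, fun a ha => h ?_⟩
  exact point_eq_of_mem_span (Submodule.mem_span_singleton.mpr ⟨a, ha⟩)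

lemma span_pair_eq (W : Submodule ℂ (Fin 4 → ℂ)) (hW : Module.finrank ℂ W = 2)
    {a b : Fin 4 → ℂ} (ha : a ∈ W) (hb : b ∈ W) (hab : LinearIndependent ℂ ![a, b]) :
    Submodule.span ℂ {a, b} = W := by
  have hle : Submodule.span ℂ {a, b} ≤ W := by
    rw [Submodule.span_le]
    rintro x (rfl | rfl) <;> assumption
  refine Submodule.eq_of_le_of_finrank_le hle ?_
  rw [hW]
  have hr : ({a, b} : Set (Fin 4 → ℂ)) = Set.range ![a, b] := by
    ext z; simp [Fin.exists_fin_two]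
    tauto
  rw [hr, finrank_span_eq_card hab]
  simp

end Helpers

set_option maxHeartbeats 1000000 in
/-- Lemma: Quadrics and (2,4) grids.
Let `R = ℙ(U)` and `R' = ℙ(U')` be skew lines in `ℙ³` over `ℂ`, let `P 0, …, P 3` be
pairwise distinct points on `R` and `P' 0, …, P' 3` pairwise distinct points on `R'`, and
let `rᵢ` be the line through `P i` and `P' i` (with corresponding subspace
`(P i).submodule ⊔ (P' i).submodule`).  Then some nonzero quadratic form on `ℂ⁴` vanishes
on all four lines `r₀, …, r₃` if and only if there is a linear isomorphism `f : U ≃ U'`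
whose induced projective map sends `P i` to `P' i` for every `i` (equivalently, the two
cross-ratios agree). -/

theorem quadric_through_four_lines_iff_projectively_equivalent
    (U U' : Submodule ℂ (Fin 4 → ℂ))
    (hU : Module.finrank ℂ U = 2) (hU' : Module.finrank ℂ U' = 2)
    (hskew : U ⊓ U' = ⊥)
    (P P' : Fin 4 → ℙ ℂ (Fin 4 → ℂ))
    (hP : ∀ i, (P i).submodule ≤ U) (hP' : ∀ i, (P' i).submodule ≤ U')
    (hPinj : Function.Injective P) (hP'inj : Function.Injective P') :
    (∃ q : QuadraticForm ℂ (Fin 4 → ℂ), q ≠ 0 ∧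
        ∀ i : Fin 4, ∀ v ∈ (P i).submodule ⊔ (P' i).submodule, q v = 0) ↔
    (∃ f : U ≃ₗ[ℂ] U', ∀ i : Fin 4, ∀ v : U,
        Submodule.span ℂ {(v : Fin 4 → ℂ)} = (P i).submodule →
        Submodule.span ℂ {((f v : U') : Fin 4 → ℂ)} = (P' i).submodule) := by
  classical
  set p : Fin 4 → (Fin 4 → ℂ) := fun i => (P i).rep with hpdef
  set p' : Fin 4 → (Fin 4 → ℂ) := fun i => (P' i).rep with hp'def
  have hPsub : ∀ i, (P i).submodule = Submodule.span ℂ {p i} := fun i =>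
    Projectivization.submodule_eq _
  have hP'sub : ∀ i, (P' i).submodule = Submodule.span ℂ {p' i} := fun i =>
    Projectivization.submodule_eq _
  have hmem : ∀ i, p i ∈ U := fun i =>
    hP i (by rw [hPsub]; exact Submodule.mem_span_singleton_self _)
  have hmem' : ∀ i, p' i ∈ U' := fun i =>
    hP' i (by rw [hP'sub]; exact Submodule.mem_span_singleton_self _)
  have hp0 : ∀ i, p i ≠ 0 := fun i => (P i).rep_nonzero
  have hp'0 : ∀ i, p' i ≠ 0 := fun i => (P' i).rep_nonzero
  have hnotmem : ∀ i j, i ≠ j → p i ∉ Submodule.span ℂ {p j} := by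
    intro i j hij hm
    exact hij (hPinj (point_eq_of_mem_span hm))
  have hnotmem' : ∀ i j, i ≠ j → p' i ∉ Submodule.span ℂ {p' j} := by
    intro i j hij hm
    exact hij (hP'inj (point_eq_of_mem_span hm))
  have hind : ∀ i j, i ≠ j → LinearIndependent ℂ ![p i, p j] := fun i j h =>
    indep_of_ne (fun e => h (hPinj e))
  have hind' : ∀ i j, i ≠ j → LinearIndependent ℂ ![p' i, p' j] := fun i j h =>
    indep_of_ne (fun e => h (hP'inj e))
  have hUeq : ∀ i j, i ≠ j → Submodule.span ℂ {p i, p j} = U := fun i j h =>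
    span_pair_eq U hU (hmem i) (hmem j) (hind i j h)
  have hU'eq : ∀ i j, i ≠ j → Submodule.span ℂ {p' i, p' j} = U' := fun i j h =>
    span_pair_eq U' hU' (hmem' i) (hmem' j) (hind' i j h)
  have hdisj : Disjoint U U' := disjoint_iff.mpr hskew
  have hsup : U ⊔ U' = ⊤ := by
    refine Submodule.eq_top_of_disjoint U U' ?_ hdisj
    rw [hU, hU']
    simp [Module.finrank_fintype_fun_eq_card]
  have hcompl : IsCompl U U' := ⟨hdisj, codisjoint_iff.mpr hsup⟩
  constructor
  · -- forward direction
    rintro ⟨q, hq0, hq⟩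
    have hqp : ∀ i, q (p i) = 0 := fun i =>
      hq i (p i) (Submodule.mem_sup_left
        (by rw [hPsub]; exact Submodule.mem_span_singleton_self _))
    have hqp' : ∀ i, q (p' i) = 0 := fun i =>
      hq i (p' i) (Submodule.mem_sup_right
        (by rw [hP'sub]; exact Submodule.mem_span_singleton_self _))
    have hpol : ∀ i, QuadraticMap.polar q (p i) (p' i) = 0 := by
      intro i
      have hsum : q (p i + p' i) = 0 :=
        hq i _ (Submodule.add_mem _
          (Submodule.mem_sup_left (by rw [hPsub]; exact Submodule.mem_span_singleton_self _))
          (Submodule.mem_sup_right (by rw [hP'sub]; exact Submodule.mem_span_singleton_self _)))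
      rw [QuadraticMap.polar, hsum, hqp, hqp']; ring
    have hpolU : ∀ i j, i ≠ j → QuadraticMap.polar q (p i) (p j) = 0 := by
      intro i j hij
      obtain ⟨k, hki, hkj⟩ : ∃ k : Fin 4, k ≠ i ∧ k ≠ j := by
        revert hij; revert i j; decide
      obtain ⟨α, β, hαβ⟩ := Submodule.mem_span_pair.mp (by rw [hUeq i j hij]; exact hmem k)
      have hα : α ≠ 0 := by
        rintro rfl
        exact hnotmem k j hkj (Submodule.mem_span_singleton.mpr ⟨β, by simpa using hαβ⟩)
      have hβ : β ≠ 0 := by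
        rintro rfl
        exact hnotmem k i hki (Submodule.mem_span_singleton.mpr ⟨α, by simpa using hαβ⟩)
      have hexp := quad_expand q α β (p i) (p j)
      rw [hαβ, hqp, hqp, hqp] at hexp
      have : α * β * QuadraticMap.polar q (p i) (p j) = 0 := by linear_combination -hexp 
      rcases mul_eq_zero.mp this with h | h
      · exact absurd h (mul_ne_zero hα hβ)
      · exact h
    have hpolU' : ∀ i j, i ≠ j → QuadraticMap.polar q (p' i) (p' j) = 0 := by
      intro i j hij
      obtain ⟨k, hki, hkj⟩ : ∃ k : Fin 4, k ≠ i ∧ k ≠ j := by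
        revert hij; revert i j; decide
      obtain ⟨α, β, hαβ⟩ := Submodule.mem_span_pair.mp (by rw [hU'eq i j hij]; exact hmem' k)
      have hα : α ≠ 0 := by
        rintro rfl
        exact hnotmem' k j hkj (Submodule.mem_span_singleton.mpr ⟨β, by simpa using hαβ⟩)
      have hβ : β ≠ 0 := by
        rintro rfl
        exact hnotmem' k i hki (Submodule.mem_span_singleton.mpr ⟨α, by simpa using hαβ⟩)
      have hexp := quad_expand q α β (p' i) (p' j)
      rw [hαβ, hqp', hqp', hqp'] at hexp
      have : α * β * QuadraticMap.polar q (p' i) (p' j) = 0 := by linear_combination -hexp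
      rcases mul_eq_zero.mp this with h | h
      · exact absurd h (mul_ne_zero hα hβ)
      · exact h
    have hqU : ∀ v ∈ U, q v = 0 := by
      intro v hv
      obtain ⟨s, t, hst⟩ := Submodule.mem_span_pair.mp (by rw [hUeq 0 1 (by decide)]; exact hv)
      rw [← hst, quad_expand, hqp, hqp, hpolU 0 1 (by decide)]; ring
    have hqU' : ∀ v ∈ U', q v = 0 := by
      intro v hv
      obtain ⟨s, t, hst⟩ := Submodule.mem_span_pair.mp (by rw [hU'eq 0 1 (by decide)]; exact hv)
      rw [← hst, quad_expand, hqp', hqp', hpolU' 0 1 (by decide)]; ring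
    -- key: no nonzero u in U can pair trivially with all of U'
    have hker : ∀ u : Fin 4 → ℂ, u ∈ U → u ≠ 0 →
        (∀ w ∈ U', QuadraticMap.polar q u w = 0) → False := by
      intro u huU hu0 hupol
      have hbad : ∀ i j : Fin 4, p i ∈ Submodule.span ℂ {u} →
          p j ∈ Submodule.span ℂ {u} → i = j := by
        intro i j hi hj
        obtain ⟨a, ha⟩ := Submodule.mem_span_singleton.mp hi
        obtain ⟨b, hb⟩ := Submodule.mem_span_singleton.mp hj
        have hb0 : b ≠ 0 := by
          rintro rfl
          exact hp0 j (by simpa using hb.symm)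
        by_contra hij
        apply hnotmem i j hij
        rw [Submodule.mem_span_singleton]
        exact ⟨a / b, by rw [← hb, smul_smul, div_mul_cancel₀ _ hb0, ha]⟩
      obtain ⟨j, i1, i2, hji1, hji2, hi12, hjs, h1s, h2s⟩ :
          ∃ j i1 i2 : Fin 4, j ≠ i1 ∧ j ≠ i2 ∧ i1 ≠ i2 ∧
            p j ∉ Submodule.span ℂ {u} ∧ p i1 ∉ Submodule.span ℂ {u} ∧
            p i2 ∉ Submodule.span ℂ {u} := by
        by_cases h0 : p 0 ∈ Submodule.span ℂ {u}
        · exact ⟨1, 2, 3, by decide, by decide, by decide,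
            fun h => absurd (hbad 1 0 h h0) (by decide),
            fun h => absurd (hbad 2 0 h h0) (by decide),
            fun h => absurd (hbad 3 0 h h0) (by decide)⟩
        · by_cases h1 : p 1 ∈ Submodule.span ℂ {u}
          · exact ⟨0, 2, 3, by decide, by decide, by decide, h0,
              fun h => absurd (hbad 2 1 h h1) (by decide),
              fun h => absurd (hbad 3 1 h h1) (by decide)⟩
          · by_cases h2 : p 2 ∈ Submodule.span ℂ {u}
            · exact ⟨0, 1, 3, by decide, by decide, by decide, h0, h1,
                fun h => absurd (hbad 3 2 h h2) (by decide)⟩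
            · exact ⟨0, 1, 2, by decide, by decide, by decide, h0, h1, h2⟩
      have hindju : LinearIndependent ℂ ![p j, u] := by
        rw [linearIndependent_fin2]
        simp only [Matrix.cons_val_zero, Matrix.cons_val_one, Matrix.head_cons]
        exact ⟨hu0, fun a ha => hjs (Submodule.mem_span_singleton.mpr ⟨a, ha⟩)⟩
      have hUju : Submodule.span ℂ {p j, u} = U := span_pair_eq U hU (hmem j) huU hindju
      have hkey : ∀ i : Fin 4, p i ∉ Submodule.span ℂ {u} →
          QuadraticMap.polar q (p j) (p' i) = 0 := by
        intro i hi
        obtain ⟨a, b, hab⟩ := Submodule.mem_span_pair.mp (by rw [hUju]; exact hmem i)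
        have ha0 : a ≠ 0 := by
          rintro rfl
          exact hi (Submodule.mem_span_singleton.mpr ⟨b, by simpa using hab⟩)
        have h0 := hpol i
        rw [← hab, QuadraticMap.polar_add_left, QuadraticMap.polar_smul_left,
          QuadraticMap.polar_smul_left, hupol (p' i) (hmem' i)] at h0
        simp only [smul_eq_mul, mul_zero, add_zero] at h0
        rcases mul_eq_zero.mp h0 with h | h
        · exact absurd h ha0
        · exact h
      have hjU' : ∀ w ∈ U', QuadraticMap.polar q (p j) w = 0 := by
        intro w hw
        obtain ⟨a, b, hab⟩ := Submodule.mem_span_pair.mp (by rw [hU'eq i1 i2 hi12]; exact hw)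
        rw [← hab, QuadraticMap.polar_add_right, QuadraticMap.polar_smul_right,
          QuadraticMap.polar_smul_right, hkey i1 h1s, hkey i2 h2s]
        simp
      have hall : ∀ v ∈ U, ∀ w ∈ U', QuadraticMap.polar q v w = 0 := by
        intro v hv w hw
        obtain ⟨a, b, hab⟩ := Submodule.mem_span_pair.mp (by rw [hUju]; exact hv)
        rw [← hab, QuadraticMap.polar_add_left, QuadraticMap.polar_smul_left,
          QuadraticMap.polar_smul_left, hjU' w hw, hupol w hw]
        simp
      apply hq0
      ext v
      have hvtop : v ∈ U ⊔ U' := by rw [hsup]; trivial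
      obtain ⟨a, ha, b, hb, rfl⟩ := Submodule.mem_sup.mp hvtop
      have hdecomp : q (a + b) = QuadraticMap.polar q a b + q a + q b := by
        rw [QuadraticMap.polar]; ring
      rw [hdecomp, hall a ha b hb, hqU a ha, hqU' b hb]
      simp
    -- construct the linear map
    set Bq := QuadraticMap.polarBilin q with hBq
    set z0' : U' := ⟨p' 0, hmem' 0⟩ with hz0'
    set z1' : U' := ⟨p' 1, hmem' 1⟩ with hz1'
    set A : (Fin 4 → ℂ) →ₗ[ℂ] U' :=
      (Bq.flip (p' 1)).smulRight z0' - (Bq.flip (p' 0)).smulRight z1' with hA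
    set f0 : U →ₗ[ℂ] U' := A.comp U.subtype with hf0
    have hf0app : ∀ u : U, ((f0 u : U') : Fin 4 → ℂ)
        = QuadraticMap.polar q (u : Fin 4 → ℂ) (p' 1) • p' 0
          + (-(QuadraticMap.polar q (u : Fin 4 → ℂ) (p' 0))) • p' 1 := by
      intro u
      simp only [hf0, hA, hBq, LinearMap.comp_apply, Submodule.subtype_apply,
        LinearMap.sub_apply, LinearMap.smulRight_apply, LinearMap.flip_apply,
        QuadraticMap.polarBilin_apply_apply]
      rw [sub_eq_add_neg, ← neg_smul]
      rfl
    have hclaim : ∀ i : Fin 4,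
        ((f0 ⟨p i, hmem i⟩ : U') : Fin 4 → ℂ) ∈ Submodule.span ℂ {p' i} := by
      intro i
      obtain ⟨c, d, hcd⟩ := Submodule.mem_span_pair.mp
        (by rw [hU'eq 0 1 (by decide)]; exact hmem' i)
      have h0 := hpol i
      rw [← hcd, QuadraticMap.polar_add_right, QuadraticMap.polar_smul_right,
        QuadraticMap.polar_smul_right] at h0
      simp only [smul_eq_mul] at h0
      have hdet : QuadraticMap.polar q (p i) (p' 1) * d
          = (-(QuadraticMap.polar q (p i) (p' 0))) * c := by linear_combination h0
      have hw : c • p' 0 + d • p' 1 ≠ 0 := by rw [hcd]; exact hp'0 i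
      have hm := mem_span_of_det hdet hw
      rw [hcd] at hm
      rw [hf0app]
      exact hm
    have hinj : Function.Injective f0 := by
      rw [← LinearMap.ker_eq_bot, LinearMap.ker_eq_bot']
      intro u hu
      by_contra hu0
      have hcoe0 : (u : Fin 4 → ℂ) ≠ 0 := fun h => hu0 (Subtype.ext h)
      have heq : QuadraticMap.polar q (u : Fin 4 → ℂ) (p' 1) • p' 0
          + (-(QuadraticMap.polar q (u : Fin 4 → ℂ) (p' 0))) • p' 1 = 0 := by
        rw [← hf0app, hu]
        rfl
      have hz : ∀ i : Fin 2, (![QuadraticMap.polar q (u : Fin 4 → ℂ) (p' 1),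
          -(QuadraticMap.polar q (u : Fin 4 → ℂ) (p' 0))] : Fin 2 → ℂ) i = 0 := by
        apply Fintype.linearIndependent_iff.mp (hind' 0 1 (by decide))
        rw [Fin.sum_univ_two]
        simpa using heq
      have h1' : QuadraticMap.polar q (u : Fin 4 → ℂ) (p' 1) = 0 := by simpa using hz 0
      have h0' : QuadraticMap.polar q (u : Fin 4 → ℂ) (p' 0) = 0 := by
        have := hz 1; simpa using this
      have hupol : ∀ w ∈ U', QuadraticMap.polar q (u : Fin 4 → ℂ) w = 0 := by
        intro w hw
        obtain ⟨a, b, hab⟩ := Submodule.mem_span_pair.mp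
          (by rw [hU'eq 0 1 (by decide)]; exact hw)
        rw [← hab, QuadraticMap.polar_add_right, QuadraticMap.polar_smul_right,
          QuadraticMap.polar_smul_right, h0', h1']
        simp
      exact hker u u.2 hcoe0 hupol
    have hfd : Module.finrank ℂ U = Module.finrank ℂ U' := by rw [hU, hU']
    refine ⟨f0.linearEquivOfInjective hinj hfd, ?_⟩
    intro i v hv
    rw [LinearMap.linearEquivOfInjective_apply]
    have hvmem : (v : Fin 4 → ℂ) ∈ Submodule.span ℂ {p i} := by
      rw [← hPsub, ← hv]
      exact Submodule.mem_span_singleton_self _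
    obtain ⟨c, hc⟩ := Submodule.mem_span_singleton.mp hvmem
    have hv0 : (v : Fin 4 → ℂ) ≠ 0 := by
      intro h
      rw [h] at hv
      have hpmem : p i ∈ Submodule.span ℂ {(0 : Fin 4 → ℂ)} := by
        rw [hv, hPsub]
        exact Submodule.mem_span_singleton_self _
      simp at hpmem
      exact hp0 i hpmem
    have hc0 : c ≠ 0 := by
      rintro rfl
      rw [zero_smul] at hc
      exact hv0 hc.symm
    have hveq : v = c • (⟨p i, hmem i⟩ : U) := Subtype.ext (by rw [← hc]; rfl)
    rw [hveq, map_smul]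
    rw [show ((c • f0 ⟨p i, hmem i⟩ : U') : Fin 4 → ℂ)
        = c • ((f0 ⟨p i, hmem i⟩ : U') : Fin 4 → ℂ) from rfl]
    rw [Submodule.span_singleton_smul_eq hc0.isUnit]
    obtain ⟨e, he⟩ := Submodule.mem_span_singleton.mp (hclaim i)
    have hfz0 : ((f0 ⟨p i, hmem i⟩ : U') : Fin 4 → ℂ) ≠ 0 := by
      intro h
      have hzero : (⟨p i, hmem i⟩ : U) = 0 :=
        hinj (show f0 _ = f0 0 by rw [map_zero]; exact Subtype.ext h)
      exact hp0 i (congrArg Subtype.val hzero)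
    have he0 : e ≠ 0 := by
      rintro rfl
      rw [zero_smul] at he
      exact hfz0 he.symm
    rw [← he, Submodule.span_singleton_smul_eq he0.isUnit]
    exact (hP'sub i).symm
  · -- backward direction
    rintro ⟨f, hf⟩
    -- basis of U' from p' 0, p' 1
    set v0' : U' := ⟨p' 0, hmem' 0⟩ with hv0'
    set v1' : U' := ⟨p' 1, hmem' 1⟩ with hv1'
    have hli : LinearIndependent ℂ ![v0', v1'] := by
      apply LinearIndependent.of_comp U'.subtype
      have : (U'.subtype ∘ ![v0', v1']) = ![p' 0, p' 1] := by
        funext i; fin_cases i <;> rfl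
      rw [this]
      exact hind' 0 1 (by decide)
    have hcard : Fintype.card (Fin 2) = Module.finrank ℂ U' := by simp [hU']
    set bU' : Module.Basis (Fin 2) ℂ U' := basisOfLinearIndependentOfCardEqFinrank hli hcard with hbU'
    have hbU'0 : bU' 0 = v0' := by
      rw [hbU', coe_basisOfLinearIndependentOfCardEqFinrank]; rfl
    have hbU'1 : bU' 1 = v1' := by
      rw [hbU', coe_basisOfLinearIndependentOfCardEqFinrank]; rfl
    set c0 : U' →ₗ[ℂ] ℂ := bU'.coord 0 with hc0
    set c1 : U' →ₗ[ℂ] ℂ := bU'.coord 1 with hc1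
    have key : ∀ (i j : Fin 2), bU'.coord i (bU' j) = if j = i then 1 else 0 := by
      intro i j; rw [Module.Basis.coord_apply, Module.Basis.repr_self, Finsupp.single_apply]
    have hc00 : c0 v0' = 1 := by rw [hc0, ← hbU'0, key]; norm_num
    have hc01 : c0 v1' = 0 := by rw [hc0, ← hbU'1, key]; norm_num
    have hc10 : c1 v0' = 0 := by rw [hc1, ← hbU'0, key]; norm_num
    have hc11 : c1 v1' = 1 := by rw [hc1, ← hbU'1, key]; norm_num
    set π : (Fin 4 → ℂ) →ₗ[ℂ] U := Submodule.projectionOnto U U' hcompl with hπ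
    set π' : (Fin 4 → ℂ) →ₗ[ℂ] U' := Submodule.projectionOnto U' U hcompl.symm with hπ'
    set g : (Fin 4 → ℂ) →ₗ[ℂ] U' := f.toLinearMap.comp π with hg
    set B : (Fin 4 → ℂ) →ₗ[ℂ] (Fin 4 → ℂ) →ₗ[ℂ] ℂ :=
      LinearMap.mk₂ ℂ (fun v w => c0 (g v) * c1 (π' w) - c1 (g v) * c0 (π' w))
        (by intro a b w; simp [map_add]; ring)
        (by intro a v w; simp [map_smul, smul_eq_mul]; ring)
        (by intro v a b; simp [map_add]; ring)
        (by intro a v w; simp [map_smul, smul_eq_mul]; ring) with hB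
    refine ⟨LinearMap.BilinMap.toQuadraticMap B, ?_, ?_⟩
    · intro hz
      have hval : LinearMap.BilinMap.toQuadraticMap B (((f.symm v0' : U) : Fin 4 → ℂ) + p' 1) = 1 := by
        have hπv : π (((f.symm v0' : U) : Fin 4 → ℂ) + p' 1) = f.symm v0' := by
          rw [map_add, Submodule.projectionOnto_apply_left,
            Submodule.projectionOnto_apply_of_mem_right _ (hmem' 1), add_zero]
        have hπ'v : π' (((f.symm v0' : U) : Fin 4 → ℂ) + p' 1) = v1' := by
          rw [map_add, Submodule.projectionOnto_apply_of_mem_right _ (f.symm v0').2]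
          rw [zero_add]
          exact Submodule.projectionOnto_apply_left hcompl.symm v1'
        rw [LinearMap.BilinMap.toQuadraticMap_apply, hB]
        simp only [LinearMap.mk₂_apply, hg, LinearMap.comp_apply, hπv, hπ'v,
          LinearEquiv.coe_coe, LinearEquiv.apply_symm_apply]
        rw [hc00, hc11, hc10, hc01]; ring
      rw [hz] at hval
      simp at hval
    · intro i v hv
      rw [Submodule.mem_sup] at hv
      obtain ⟨a, ha, b, hb, rfl⟩ := hv
      rw [hPsub] at ha
      rw [hP'sub] at hb
      obtain ⟨s, rfl⟩ := Submodule.mem_span_singleton.mp ha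
      obtain ⟨t, rfl⟩ := Submodule.mem_span_singleton.mp hb
      set zi : U := ⟨p i, hmem i⟩ with hzi
      set zi' : U' := ⟨p' i, hmem' i⟩ with hzi'
      have hfz : ∃ e : ℂ, f zi = e • zi' := by
        have hsp : Submodule.span ℂ {((f zi : U') : Fin 4 → ℂ)} = (P' i).submodule :=
          hf i zi (by rw [hzi]; exact (hPsub i).symm)
        have : ((f zi : U') : Fin 4 → ℂ) ∈ Submodule.span ℂ {p' i} := by
          rw [← hP'sub, ← hsp]
          exact Submodule.mem_span_singleton_self _
        obtain ⟨e, he⟩ := Submodule.mem_span_singleton.mp this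
        exact ⟨e, by apply Subtype.ext; rw [← he]; rfl⟩
      obtain ⟨e, hfe⟩ := hfz
      have hπv : π (s • p i + t • p' i) = s • zi := by
        rw [map_add, map_smul, map_smul]
        rw [show π (p i) = zi from Submodule.projectionOnto_apply_left hcompl zi]
        rw [Submodule.projectionOnto_apply_of_mem_right _ (hmem' i), smul_zero, add_zero]
      have hπ'v : π' (s • p i + t • p' i) = t • zi' := by
        rw [map_add, map_smul, map_smul]
        rw [Submodule.projectionOnto_apply_of_mem_right _ (hmem i), smul_zero, zero_add]
        rw [show π' (p' i) = zi' from Submodule.projectionOnto_apply_left hcompl.symm zi']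
      rw [LinearMap.BilinMap.toQuadraticMap_apply, hB]
      simp only [LinearMap.mk₂_apply, hg, LinearMap.comp_apply, hπv, hπ'v,
        LinearEquiv.coe_coe, map_smul, hfe]
      simp only [smul_smul, map_smul, smul_eq_mul]
      ring
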